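/- arXiv:1605.00348 — 2 statements merged into one kernel-verified Lean document; each statement's English description precedes it below -/
import Mathlib

section
/- The quantity M is multiplicative in the dual formulation: for orthogonal projections P on A⊗B and Q on A'⊗B', min { ‖R^{T_{BB'}}‖_∞ : R ≥ P ⊗ Q } ≤ (min { ‖R₁^{T_B}‖_∞ : R₁ ≥ P }) · (min { ‖R₂^{T_{B'}}‖_∞ : R₂ ≥ Q }). Consequently E_M(ρ ⊗ σ) ≥ E_M(ρ) + E_M(σ). -/
open scoped Matrix ComplexOrder

/-- Partial transpose on the second tensor factor. -/
def pt {α β : Type*} (M : Matrix (α × β) (α × β) ℂ) : Matrix (α × β) (α × β) ℂ :=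
  fun p q => M (p.1, q.2) (q.1, p.2)

open scoped Classical in
/-- Trace norm of a Hermitian matrix: sum of absolute values of eigenvalues
(and `0` on non-Hermitian matrices). -/
noncomputable def traceNorm {n : Type*} [Fintype n] [DecidableEq n]
    (M : Matrix n n ℂ) : ℝ :=
  if h : M.IsHermitian then ∑ i, |h.eigenvalues i| else 0

open scoped Classical in
/-- Operator norm of a Hermitian matrix: maximum absolute value of eigenvalues
(and `0` on non-Hermitian matrices). -/
noncomputable def opNorm {n : Type*} [Fintype n] [DecidableEq n]
    (M : Matrix n n ℂ) : ℝ :=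
  if h : M.IsHermitian then ⨆ i, |h.eigenvalues i| else 0

/-- Tensor product of bipartite matrices, with the bipartite structure
`(A ⊗ A') ⊗ (B ⊗ B')` on the result. -/
def tens {a b c d : Type*}
    (R₁ : Matrix (a × b) (a × b) ℂ) (R₂ : Matrix (c × d) (c × d) ℂ) :
    Matrix ((a × c) × (b × d)) ((a × c) × (b × d)) ℂ :=
  fun p q => R₁ (p.1.1, p.2.1) (q.1.1, q.2.1) * R₂ (p.1.2, p.2.2) (q.1.2, q.2.2)

open Matrix
open scoped Kronecker

set_option linter.unusedSectionVars false
set_option maxHeartbeats 1000000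

section aux
variable {n m : Type*} [Fintype n] [DecidableEq n] [Fintype m] [DecidableEq m]

lemma rcl_ofReal : (RCLike.ofReal : ℝ → ℂ) = Complex.ofReal := by
  rw [← RCLike.algebraMap_eq_ofReal]; exact Complex.coe_algebraMap

lemma psd_smul {M : Matrix n n ℂ} (h : M.PosSemidef) {c : ℝ} (hc : 0 ≤ c) :
    ((c : ℂ) • M).PosSemidef := by
  refine posSemidef_iff_dotProduct_mulVec.mpr ⟨?_, ?_⟩
  · unfold Matrix.IsHermitian
    rw [conjTranspose_smul, h.1.eq]
    congr 1
    simp [Complex.star_def, Complex.conj_ofReal]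
  · intro x
    have h2 := h.dotProduct_mulVec_nonneg x
    rw [smul_mulVec, dotProduct_smul]
    exact smul_nonneg (by exact_mod_cast Complex.zero_le_real.mpr hc) h2

lemma conjT_kron (A : Matrix n n ℂ) (B : Matrix m m ℂ) :
    (A ⊗ₖ B)ᴴ = Aᴴ ⊗ₖ Bᴴ := by
  ext ⟨i1, i2⟩ ⟨j1, j2⟩
  simp [conjTranspose_apply, kroneckerMap_apply, mul_comm]

lemma psd_kron {A : Matrix n n ℂ} {B : Matrix m m ℂ}
    (hA : A.PosSemidef) (hB : B.PosSemidef) : (A ⊗ₖ B).PosSemidef := by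
  exact hA.kronecker hB

lemma opNorm_nonneg' (M : Matrix n n ℂ) : 0 ≤ opNorm M := by
  unfold opNorm
  split
  · exact Real.iSup_nonneg fun i => abs_nonneg _
  · exact le_refl 0

lemma psd_diag {M : Matrix n n ℂ} (h : M.PosSemidef) (i : n) : 0 ≤ M i i := by
  have h2 := h.dotProduct_mulVec_nonneg (Pi.single i 1)
  simpa [dotProduct, mulVec_single, Pi.single_apply, Finset.sum_ite_eq'] using h2

/-- spectral rewriting of `t•1 + s•M`. -/
lemma spectral_shift {M : Matrix n n ℂ} (h : M.IsHermitian) (t s : ℝ) :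
    (t : ℂ) • (1 : Matrix n n ℂ) + (s : ℂ) • M =
      (h.eigenvectorUnitary : Matrix n n ℂ) *
        diagonal (fun i => ((t + s * h.eigenvalues i : ℝ) : ℂ)) *
        star (h.eigenvectorUnitary : Matrix n n ℂ) := by
  set U := (h.eigenvectorUnitary : Matrix n n ℂ) with hU
  have hUU : U * star U = 1 := Unitary.mul_star_self_of_mem h.eigenvectorUnitary.2
  have hM : M = U * diagonal (RCLike.ofReal ∘ h.eigenvalues) * star U := h.spectral_theorem
  have hD : diagonal (fun i => ((t + s * h.eigenvalues i : ℝ) : ℂ)) =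
      (t : ℂ) • (1 : Matrix n n ℂ) +
        (s : ℂ) • diagonal (RCLike.ofReal ∘ h.eigenvalues) := by
    ext i j
    rcases eq_or_ne i j with rfl | hij
    · simp only [Matrix.diagonal_apply_eq, Matrix.add_apply, Matrix.smul_apply,
        Matrix.one_apply_eq, smul_eq_mul, Function.comp_apply, rcl_ofReal]
      push_cast
      ring
    · simp [Matrix.diagonal_apply_ne _ hij, Matrix.one_apply_ne hij]
  rw [hD, Matrix.mul_add, Matrix.add_mul, mul_smul_comm, mul_smul_comm, smul_mul_assoc,
    smul_mul_assoc, Matrix.mul_one, hUU, ← hM]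

lemma abs_eig_le_opNorm {M : Matrix n n ℂ} (h : M.IsHermitian) (i : n) :
    |h.eigenvalues i| ≤ opNorm M := by
  have e : opNorm M = ⨆ i, |h.eigenvalues i| := by
    unfold opNorm
    exact dif_pos h
  rw [e]
  exact le_ciSup (f := fun j => |h.eigenvalues j|) (Set.Finite.bddAbove (Set.finite_range _)) i

lemma opNorm_psd_bound {M : Matrix n n ℂ} (h : M.IsHermitian) {s : ℝ} (hs : |s| ≤ 1) :
    ((opNorm M : ℂ) • (1 : Matrix n n ℂ) + (s : ℂ) • M).PosSemidef := by
  rw [spectral_shift h (opNorm M) s,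
    Matrix.star_eq_conjTranspose ((h.eigenvectorUnitary : Matrix n n ℂ))]
  apply Matrix.PosSemidef.mul_mul_conjTranspose_same
  rw [Matrix.posSemidef_diagonal_iff]
  intro i
  rw [Complex.zero_le_real]
  have h1 := abs_le.mp (abs_eig_le_opNorm h i)
  have h2 := abs_le.mp hs
  nlinarith [abs_nonneg (h.eigenvalues i), abs_nonneg s,
    neg_abs_le (s * h.eigenvalues i), abs_mul s (h.eigenvalues i),
    mul_le_of_le_one_left (abs_nonneg (h.eigenvalues i)) hs,
    abs_eig_le_opNorm h i]

lemma opNorm_sub_psd {M : Matrix n n ℂ} (h : M.IsHermitian) :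
    ((opNorm M : ℂ) • (1 : Matrix n n ℂ) - M).PosSemidef := by
  have := opNorm_psd_bound h (s := -1) (by norm_num)
  have e : ((opNorm M : ℂ) • (1 : Matrix n n ℂ) + ((-1 : ℝ) : ℂ) • M)
      = (opNorm M : ℂ) • (1 : Matrix n n ℂ) - M := by
    push_cast
    module
  rwa [e] at this

lemma opNorm_add_psd {M : Matrix n n ℂ} (h : M.IsHermitian) :
    ((opNorm M : ℂ) • (1 : Matrix n n ℂ) + M).PosSemidef := by
  have := opNorm_psd_bound h (s := 1) (by norm_num)
  have e : ((opNorm M : ℂ) • (1 : Matrix n n ℂ) + ((1 : ℝ) : ℂ) • M)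
      = (opNorm M : ℂ) • (1 : Matrix n n ℂ) + M := by
    push_cast
    module
  rwa [e] at this

lemma eig_shift_nonneg {M : Matrix n n ℂ} (h : M.IsHermitian) (t s : ℝ)
    (hpsd : ((t : ℂ) • (1 : Matrix n n ℂ) + (s : ℂ) • M).PosSemidef) (i : n) :
    0 ≤ t + s * h.eigenvalues i := by
  rw [spectral_shift h t s] at hpsd
  set U := (h.eigenvectorUnitary : Matrix n n ℂ) with hU
  have hsUU : star U * U = 1 := Unitary.star_mul_self_of_mem h.eigenvectorUnitary.2
  have h2 := hpsd.conjTranspose_mul_mul_same U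
  rw [← Matrix.star_eq_conjTranspose] at h2
  have e : star U * (U * diagonal (fun i => ((t + s * h.eigenvalues i : ℝ) : ℂ)) * star U) * U
      = diagonal (fun i => ((t + s * h.eigenvalues i : ℝ) : ℂ)) := by
    rw [Matrix.mul_assoc U _ (star U), ← Matrix.mul_assoc (star U) U, hsUU, Matrix.one_mul,
      Matrix.mul_assoc _ (star U) U, hsUU, Matrix.mul_one]
  rw [e] at h2
  have h3 := (Matrix.posSemidef_diagonal_iff.mp h2) i
  exact_mod_cast Complex.zero_le_real.mp h3

lemma opNorm_le_of_psd {M : Matrix n n ℂ} (h : M.IsHermitian) {t : ℝ} (ht : 0 ≤ t)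
    (h1 : ((t : ℂ) • (1 : Matrix n n ℂ) - M).PosSemidef)
    (h2 : ((t : ℂ) • (1 : Matrix n n ℂ) + M).PosSemidef) :
    opNorm M ≤ t := by
  have e : opNorm M = ⨆ i, |h.eigenvalues i| := by
    unfold opNorm
    exact dif_pos h
  rw [e]
  apply Real.iSup_le _ ht
  intro i
  have e1 : ((t : ℂ) • (1 : Matrix n n ℂ) + ((-1 : ℝ) : ℂ) • M)
      = (t : ℂ) • (1 : Matrix n n ℂ) - M := by push_cast; module
  have e2 : ((t : ℂ) • (1 : Matrix n n ℂ) + ((1 : ℝ) : ℂ) • M)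
      = (t : ℂ) • (1 : Matrix n n ℂ) + M := by push_cast; module
  have k1 := eig_shift_nonneg h t (-1) (by rwa [e1]) i
  have k2 := eig_shift_nonneg h t 1 (by rwa [e2]) i
  rw [abs_le]
  constructor <;> nlinarith [k1, k2]

lemma hermitian_diag_re_le_opNorm {M : Matrix n n ℂ} (h : M.IsHermitian) (i : n) :
    (M i i).re ≤ opNorm M := by
  have hpsd := opNorm_sub_psd h
  have hd := psd_diag hpsd i
  have : ((opNorm M : ℂ) • (1 : Matrix n n ℂ) - M) i i = (opNorm M : ℂ) - M i i := by
    simp [Matrix.sub_apply, Matrix.smul_apply, Matrix.one_apply_eq]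
  rw [this] at hd
  have := (Complex.le_def.mp hd).1
  simpa using this

end aux

section tensaux
variable {a b c d : Type*} [Fintype a] [Fintype b] [Fintype c] [Fintype d]
  [DecidableEq a] [DecidableEq b] [DecidableEq c] [DecidableEq d]

lemma tens_eq_kron (R₁ : Matrix (a × b) (a × b) ℂ) (R₂ : Matrix (c × d) (c × d) ℂ) :
    tens R₁ R₂ = (R₁ ⊗ₖ R₂).submatrix (Equiv.prodProdProdComm a c b d)
      (Equiv.prodProdProdComm a c b d) := rfl

lemma tens_herm {R₁ : Matrix (a × b) (a × b) ℂ} {R₂ : Matrix (c × d) (c × d) ℂ}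
    (h₁ : R₁.IsHermitian) (h₂ : R₂.IsHermitian) : (tens R₁ R₂).IsHermitian := by
  rw [tens_eq_kron]
  apply Matrix.IsHermitian.submatrix
  unfold Matrix.IsHermitian
  rw [conjT_kron, h₁.eq, h₂.eq]

lemma tens_psd {R₁ : Matrix (a × b) (a × b) ℂ} {R₂ : Matrix (c × d) (c × d) ℂ}
    (h₁ : R₁.PosSemidef) (h₂ : R₂.PosSemidef) : (tens R₁ R₂).PosSemidef := by
  rw [tens_eq_kron]
  exact (psd_kron h₁ h₂).submatrix _

lemma one_eq_tens_one :
    (1 : Matrix ((a × c) × (b × d)) ((a × c) × (b × d)) ℂ) = tens 1 1 := by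
  rw [tens_eq_kron, Matrix.one_kronecker_one, Matrix.submatrix_one_equiv]

lemma pt_tens (R₁ : Matrix (a × b) (a × b) ℂ) (R₂ : Matrix (c × d) (c × d) ℂ) :
    pt (tens R₁ R₂) = tens (pt R₁) (pt R₂) := rfl

lemma pt_herm {R : Matrix (a × b) (a × b) ℂ} (h : R.IsHermitian) : (pt R).IsHermitian := by
  unfold Matrix.IsHermitian
  funext p q
  have := Matrix.IsHermitian.apply h (q.1, p.2) (p.1, q.2)
  simpa [pt, conjTranspose_apply] using (congrArg star this).symm

lemma pt_diag (R : Matrix (a × b) (a × b) ℂ) (p : a × b) : pt R p p = R p p := rfl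

/-- The key operator norm inequality for tensor products. -/
lemma opNorm_tens_le {A : Matrix (a × b) (a × b) ℂ} {B : Matrix (c × d) (c × d) ℂ}
    (hA : A.IsHermitian) (hB : B.IsHermitian) :
    opNorm (tens A B) ≤ opNorm A * opNorm B := by
  set s := opNorm A with hs
  set t := opNorm B with ht
  have s0 : 0 ≤ s := opNorm_nonneg' A
  have t0 : 0 ≤ t := opNorm_nonneg' B
  have hAs := opNorm_sub_psd hA
  have hAa := opNorm_add_psd hA
  have hBs := opNorm_sub_psd hB
  have hBa := opNorm_add_psd hB
  apply opNorm_le_of_psd (tens_herm hA hB) (mul_nonneg s0 t0)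
  · have key : ((s * t : ℝ) : ℂ) • (1 : Matrix ((a × c) × (b × d)) ((a × c) × (b × d)) ℂ)
        - tens A B
        = ((1/2 : ℝ) : ℂ) • (tens ((s : ℂ) • 1 - A) ((t : ℂ) • 1 + B)
            + tens ((s : ℂ) • 1 + A) ((t : ℂ) • 1 - B)) := by
      rw [one_eq_tens_one]
      funext p q
      simp only [tens, Matrix.sub_apply, Matrix.add_apply, Matrix.smul_apply, smul_eq_mul,
        Matrix.one_apply]
      push_cast
      ring
    rw [key]
    exact psd_smul ((tens_psd hAs hBa).add (tens_psd hAa hBs)) (by norm_num)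
  · have key : ((s * t : ℝ) : ℂ) • (1 : Matrix ((a × c) × (b × d)) ((a × c) × (b × d)) ℂ)
        + tens A B
        = ((1/2 : ℝ) : ℂ) • (tens ((s : ℂ) • 1 - A) ((t : ℂ) • 1 - B)
            + tens ((s : ℂ) • 1 + A) ((t : ℂ) • 1 + B)) := by
      rw [one_eq_tens_one]
      funext p q
      simp only [tens, Matrix.sub_apply, Matrix.add_apply, Matrix.smul_apply, smul_eq_mul,
        Matrix.one_apply]
      push_cast
      ring
    rw [key]
    exact psd_smul ((tens_psd hAs hBs).add (tens_psd hAa hBa)) (by norm_num)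

/-- lower bound for elements of the dual feasible set. -/
lemma elem_lb {P R : Matrix (a × b) (a × b) ℂ} (hR : R.IsHermitian)
    (hge : (R - P).PosSemidef) (p : a × b) : (P p p).re ≤ opNorm (pt R) := by
  have h1 : (R p p).re ≤ opNorm (pt R) := by
    have := hermitian_diag_re_le_opNorm (pt_herm hR) p
    rwa [pt_diag] at this
  have h2 := psd_diag hge p
  rw [Matrix.sub_apply] at h2
  have := (Complex.le_def.mp h2).1
  simp only [Complex.zero_re, Complex.sub_re] at this
  linarith

/-- positive diagonal entry for nonzero hermitian projections. -/
lemma proj_exists_pos_diag {n : Type*} [Fintype n] [DecidableEq n] {P : Matrix n n ℂ} (hP : P.IsHermitian) (hPP : P * P = P)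
    (hne : P ≠ 0) : ∃ i, 0 < (P i i).re ∧ (P i i).im = 0 := by
  have hdiag : ∀ i, P i i = ((∑ j, Complex.normSq (P i j) : ℝ) : ℂ) := by
    intro i
    conv_lhs => rw [← hPP]
    rw [Matrix.mul_apply]
    push_cast
    congr 1
    funext j
    have : P j i = (starRingEnd ℂ) (P i j) := by
      conv_lhs => rw [← hP.eq]
      simp [conjTranspose_apply]
    rw [this, Complex.mul_conj]
  by_contra hcon
  push_neg at hcon
  apply hne
  have hzero : ∀ i, P i i = 0 := by
    intro i
    have him : (P i i).im = 0 := by rw [hdiag i]; simp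
    have hre : ¬ 0 < (P i i).re := fun hpos => (hcon i hpos) him
    have hnn : 0 ≤ ∑ j, Complex.normSq (P i j) :=
      Finset.sum_nonneg fun j _ => Complex.normSq_nonneg _
    have hre2 : (P i i).re = ∑ j, Complex.normSq (P i j) := by rw [hdiag i]; simp
    rw [hdiag i]
    norm_cast
    linarith [le_of_not_gt hre, hre2.symm.le, hre2.le]
  ext i j
  have h2 := hzero i
  rw [hdiag i] at h2
  norm_cast at h2
  have h3 : ∀ k, Complex.normSq (P i k) = 0 := by
    intro k
    have := Finset.sum_eq_zero_iff_of_nonneg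
      (fun j (_ : j ∈ Finset.univ) => Complex.normSq_nonneg (P i j)) |>.mp h2
    exact this k (Finset.mem_univ k)
  simpa [Complex.normSq_eq_zero] using h3 j

end tensaux

section main
variable {a b c d : Type*} [Fintype a] [Fintype b] [Fintype c] [Fintype d]
  [DecidableEq a] [DecidableEq b] [DecidableEq c] [DecidableEq d]

/-- projections are PSD. -/
lemma proj_psd {n : Type*} [Fintype n] [DecidableEq n] {P : Matrix n n ℂ}
    (hP : P.IsHermitian) (hPP : P * P = P) : P.PosSemidef := by
  have : P = Pᴴ * P := by rw [hP.eq, hPP]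
  rw [this]
  exact Matrix.posSemidef_conjTranspose_mul_self P

/-- nonzeroness of the support projection. -/
lemma proj_ne_zero {n : Type*} [Fintype n] [DecidableEq n] {ρ P : Matrix n n ℂ}
    (hρtr : ρ.trace = 1)
    (hsupp : LinearMap.range P.mulVecLin = LinearMap.range ρ.mulVecLin) : P ≠ 0 := by
  intro h0
  rw [h0] at hsupp
  simp only [Matrix.mulVecLin_zero, LinearMap.range_zero] at hsupp
  have hρ0 : ρ.mulVecLin = 0 := LinearMap.range_eq_bot.mp hsupp.symm
  have : ρ = 0 := by
    ext i j
    have := congrFun (congrArg DFunLike.coe hρ0) (Pi.single j 1)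
    have h2 := congrFun this i
    simpa [Matrix.mulVecLin_apply, Matrix.mulVec_single] using h2
  rw [this, Matrix.trace_zero] at hρtr
  exact one_ne_zero hρtr.symm

/-- identity for the feasible direction. -/
lemma tens_sub_decomp (R₁ P : Matrix (a × b) (a × b) ℂ) (R₂ Q : Matrix (c × d) (c × d) ℂ) :
    tens R₁ R₂ - tens P Q = tens (R₁ - P) R₂ + tens P (R₂ - Q) := by
  funext p q
  simp only [tens, Matrix.sub_apply, Matrix.add_apply]
  ring

end main

/-- sub-multiplicativity of the dual SDP for `M`: for the support
projections `P`, `Q` of states `ρ`, `σ`,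
`min {‖R^{T_BB'}‖_∞ : R ≥ P ⊗ Q} ≤ min {‖R₁^{T_B}‖_∞ : R₁ ≥ P} · min {‖R₂^{T_B'}‖_∞ : R₂ ≥ Q}`;
consequently `E_M(ρ ⊗ σ) ≥ E_M(ρ) + E_M(σ)`. -/
theorem statement6 {a b c d : ℕ}
    (ρ P : Matrix (Fin a × Fin b) (Fin a × Fin b) ℂ)
    (σ Q : Matrix (Fin c × Fin d) (Fin c × Fin d) ℂ)
    (hρ : ρ.PosSemidef) (hρtr : ρ.trace = 1)
    (hσ : σ.PosSemidef) (hσtr : σ.trace = 1)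
    (hP : P.IsHermitian) (hPproj : P * P = P)
    (hsuppP : LinearMap.range P.mulVecLin = LinearMap.range ρ.mulVecLin)
    (hQ : Q.IsHermitian) (hQproj : Q * Q = Q)
    (hsuppQ : LinearMap.range Q.mulVecLin = LinearMap.range σ.mulVecLin) :
    sInf {x : ℝ | ∃ R, R.IsHermitian ∧ (R - tens P Q).PosSemidef ∧ x = opNorm (pt R)} ≤
      (sInf {x : ℝ | ∃ R₁, R₁.IsHermitian ∧ (R₁ - P).PosSemidef ∧ x = opNorm (pt R₁)}) *
      (sInf {x : ℝ | ∃ R₂, R₂.IsHermitian ∧ (R₂ - Q).PosSemidef ∧ x = opNorm (pt R₂)}) ∧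
    -Real.log (sInf {x : ℝ | ∃ R, R.IsHermitian ∧ (R - tens P Q).PosSemidef ∧
        x = opNorm (pt R)}) ≥
      -Real.log (sInf {x : ℝ | ∃ R₁, R₁.IsHermitian ∧ (R₁ - P).PosSemidef ∧
          x = opNorm (pt R₁)}) +
      -Real.log (sInf {x : ℝ | ∃ R₂, R₂.IsHermitian ∧ (R₂ - Q).PosSemidef ∧
          x = opNorm (pt R₂)}) := by
  classical
  set S : Set ℝ :=
    {x : ℝ | ∃ R, R.IsHermitian ∧ (R - tens P Q).PosSemidef ∧ x = opNorm (pt R)} with hSdef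
  set S₁ : Set ℝ :=
    {x : ℝ | ∃ R₁, R₁.IsHermitian ∧ (R₁ - P).PosSemidef ∧ x = opNorm (pt R₁)} with hS₁def
  set S₂ : Set ℝ :=
    {x : ℝ | ∃ R₂, R₂.IsHermitian ∧ (R₂ - Q).PosSemidef ∧ x = opNorm (pt R₂)} with hS₂def
  have hPpsd : P.PosSemidef := proj_psd hP hPproj
  have hQpsd : Q.PosSemidef := proj_psd hQ hQproj
  have hPne : P ≠ 0 := proj_ne_zero hρtr hsuppP
  have hQne : Q ≠ 0 := proj_ne_zero hσtr hsuppQ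
  obtain ⟨p₀, hp₀re, hp₀im⟩ := proj_exists_pos_diag hP hPproj hPne
  obtain ⟨q₀, hq₀re, hq₀im⟩ := proj_exists_pos_diag hQ hQproj hQne
  -- nonemptiness
  have ne₁ : S₁.Nonempty :=
    ⟨opNorm (pt P), P, hP, by rw [sub_self]; exact Matrix.PosSemidef.zero, rfl⟩
  have ne₂ : S₂.Nonempty :=
    ⟨opNorm (pt Q), Q, hQ, by rw [sub_self]; exact Matrix.PosSemidef.zero, rfl⟩
  have neS : S.Nonempty :=
    ⟨opNorm (pt (tens P Q)), tens P Q, tens_herm hP hQ,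
      by rw [sub_self]; exact Matrix.PosSemidef.zero, rfl⟩
  -- lower bounds
  have lb₁ : ∀ x ∈ S₁, (P p₀ p₀).re ≤ x := by
    rintro x ⟨R₁, h1, hge1, rfl⟩
    exact elem_lb h1 hge1 p₀
  have lb₂ : ∀ x ∈ S₂, (Q q₀ q₀).re ≤ x := by
    rintro x ⟨R₂, h2, hge2, rfl⟩
    exact elem_lb h2 hge2 q₀
  have hdS : (0:ℝ) < (P p₀ p₀).re * (Q q₀ q₀).re := mul_pos hp₀re hq₀re
  have lbS : ∀ x ∈ S, (P p₀ p₀).re * (Q q₀ q₀).re ≤ x := by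
    rintro x ⟨R, hR, hge, rfl⟩
    have hentry : (tens P Q) ((p₀.1, q₀.1), (p₀.2, q₀.2)) ((p₀.1, q₀.1), (p₀.2, q₀.2))
        = P p₀ p₀ * Q q₀ q₀ := rfl
    have := elem_lb hR hge ((p₀.1, q₀.1), (p₀.2, q₀.2))
    rw [hentry, Complex.mul_re, hp₀im, hq₀im] at this
    simpa using this
  have bdd₁ : BddBelow S₁ := ⟨(P p₀ p₀).re, lb₁⟩
  have bdd₂ : BddBelow S₂ := ⟨(Q q₀ q₀).re, lb₂⟩
  have bddS : BddBelow S := ⟨(P p₀ p₀).re * (Q q₀ q₀).re, lbS⟩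
  have hi₁pos : 0 < sInf S₁ := lt_of_lt_of_le hp₀re (le_csInf ne₁ lb₁)
  have hi₂pos : 0 < sInf S₂ := lt_of_lt_of_le hq₀re (le_csInf ne₂ lb₂)
  have hSpos : 0 < sInf S := lt_of_lt_of_le hdS (le_csInf neS lbS)
  -- key pointwise bound
  have key : ∀ x ∈ S₁, ∀ y ∈ S₂, sInf S ≤ x * y := by
    rintro x ⟨R₁, h1, hge1, rfl⟩ y ⟨R₂, h2, hge2, rfl⟩
    have hR₂psd : R₂.PosSemidef := by
      have := hge2.add hQpsd
      rwa [sub_add_cancel] at this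
    have hfeas : (tens R₁ R₂ - tens P Q).PosSemidef := by
      rw [tens_sub_decomp]
      exact (tens_psd hge1 hR₂psd).add (tens_psd hPpsd hge2)
    have hmem : opNorm (pt (tens R₁ R₂)) ∈ S := ⟨tens R₁ R₂, tens_herm h1 h2, hfeas, rfl⟩
    calc sInf S ≤ opNorm (pt (tens R₁ R₂)) := csInf_le bddS hmem
      _ = opNorm (tens (pt R₁) (pt R₂)) := by rw [pt_tens]
      _ ≤ opNorm (pt R₁) * opNorm (pt R₂) := opNorm_tens_le (pt_herm h1) (pt_herm h2)
  -- main inequality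
  have main : sInf S ≤ sInf S₁ * sInf S₂ := by
    refine le_of_forall_pos_le_add ?_
    intro ε hε
    have hDpos : (0:ℝ) < sInf S₁ + sInf S₂ + 1 := by linarith
    set η : ℝ := min (ε / (sInf S₁ + sInf S₂ + 1)) 1 with hηdef
    have hηpos : 0 < η := lt_min (div_pos hε hDpos) one_pos
    obtain ⟨x, hxS, hx⟩ := Real.lt_sInf_add_pos ne₁ hηpos
    obtain ⟨y, hyS, hy⟩ := Real.lt_sInf_add_pos ne₂ hηpos
    have hx0 : 0 ≤ x := le_trans hp₀re.le (lb₁ x hxS)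
    have hy0 : 0 ≤ y := le_trans hq₀re.le (lb₂ y hyS)
    have h := key x hxS y hyS
    have hηD : η * (sInf S₁ + sInf S₂ + 1) ≤ ε :=
      (le_div_iff₀ hDpos).mp (min_le_left _ _)
    have hη1 : η ≤ 1 := min_le_right _ _
    have hxy : x * y ≤ (sInf S₁ + η) * (sInf S₂ + η) :=
      mul_le_mul hx.le hy.le hy0 (by positivity)
    nlinarith [mul_le_of_le_one_right hηpos.le hη1, hηD, hxy]
  refine ⟨main, ?_⟩
  have hlog : Real.log (sInf S) ≤ Real.log (sInf S₁ * sInf S₂) :=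
    Real.log_le_log hSpos main
  rw [Real.log_mul hi₁pos.ne' hi₂pos.ne'] at hlog
  linarith
end

section
/- Conversely, if M(ρ) = 1, then there exists a PPT state σ with support contained in the support of ρ. Specifically, any optimal V for the SDP defining M(ρ) satisfies tr V ≥ tr(PV) = 1 and tr V ≤ tr|V^{T_B}| = 1, hence tr V = 1, V^{T_B} ≥ 0, and range(V) ⊆ range(ρ). -/
open scoped Matrix ComplexOrder

section aux

variable {n : Type*} [Fintype n] [DecidableEq n]

lemma trace_eq_sum_eigenvalues' {A : Matrix n n ℂ} (hA : A.IsHermitian) :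
    A.trace = ↑(∑ i, hA.eigenvalues i) := by
  conv_lhs => rw [hA.spectral_theorem, Unitary.conjStarAlgAut_apply]
  rw [Matrix.trace_mul_cycle,
    Matrix.mem_unitaryGroup_iff'.mp hA.eigenvectorUnitary.2, Matrix.one_mul,
    Matrix.trace_diagonal]
  push_cast
  rfl

lemma psd_trace_re_nonneg {A : Matrix n n ℂ} (hA : A.PosSemidef) :
    0 ≤ A.trace.re := by
  have h := congrArg Complex.re (trace_eq_sum_eigenvalues' hA.1)
  rw [h, Complex.ofReal_re]
  exact Finset.sum_nonneg fun i _ => hA.eigenvalues_nonneg i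

lemma psd_eq_zero_of_trace_re_zero {A : Matrix n n ℂ} (hA : A.PosSemidef)
    (h : A.trace.re = 0) : A = 0 := by
  have h1 := congrArg Complex.re (trace_eq_sum_eigenvalues' hA.1)
  rw [h, Complex.ofReal_re] at h1
  have h3 : ∀ i ∈ Finset.univ, hA.1.eigenvalues i = 0 :=
    (Finset.sum_eq_zero_iff_of_nonneg (fun i _ => hA.eigenvalues_nonneg i)).mp h1.symm
  have hd : Matrix.diagonal (RCLike.ofReal ∘ hA.1.eigenvalues) = (0 : Matrix n n ℂ) := by
    ext i j
    rcases eq_or_ne i j with rfl | hij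
    · simp [Matrix.diagonal, h3 i (Finset.mem_univ i)]
    · simp [Matrix.diagonal_apply_ne _ hij]
  conv_lhs => rw [hA.1.spectral_theorem, Unitary.conjStarAlgAut_apply, hd]
  rw [Matrix.mul_zero, Matrix.zero_mul]

end aux

lemma pt_conjTranspose {α β : Type*} (M : Matrix (α × β) (α × β) ℂ) :
    (pt M)ᴴ = pt Mᴴ := by
  ext p q
  simp [pt, Matrix.conjTranspose_apply]

lemma pt_isHermitian {α β : Type*} {M : Matrix (α × β) (α × β) ℂ}
    (hM : M.IsHermitian) : (pt M).IsHermitian := by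
  have : (pt M)ᴴ = pt M := by rw [pt_conjTranspose, hM.eq]
  exact this

lemma pt_trace {α β : Type*} [Fintype α] [Fintype β]
    (M : Matrix (α × β) (α × β) ℂ) : (pt M).trace = M.trace := by
  simp [Matrix.trace, Matrix.diag, pt]

/-- conversely, if `M(ρ) = 1` then any optimal `V` for the SDP
defining `M(ρ)` is a PPT state with support contained in the support of `ρ`:
`tr V = 1`, `V^{T_B} ≥ 0` and `range V ⊆ range ρ`.  In particular such a PPT
state exists once optimality is attained. -/
theorem statement9 {a b : ℕ}
    (ρ P : Matrix (Fin a × Fin b) (Fin a × Fin b) ℂ)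
    (hρ : ρ.PosSemidef) (hρtr : ρ.trace = 1)
    (hP : P.IsHermitian) (hPproj : P * P = P)
    (hsupp : LinearMap.range P.mulVecLin = LinearMap.range ρ.mulVecLin)
    (hM : sSup {x : ℝ | ∃ V, V.PosSemidef ∧ traceNorm (pt V) = 1 ∧
        x = ((P * V).trace).re} = 1)
    (V : Matrix (Fin a × Fin b) (Fin a × Fin b) ℂ)
    (hV : V.PosSemidef) (hVtn : traceNorm (pt V) = 1)
    (hVopt : ((P * V).trace).re = 1) :
    V.trace = 1 ∧ (pt V).PosSemidef ∧
    LinearMap.range V.mulVecLin ≤ LinearMap.range ρ.mulVecLin := by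
  classical
  set Q : Matrix (Fin a × Fin b) (Fin a × Fin b) ℂ := 1 - P with hQdef
  have hQherm : Qᴴ = Q := by
    rw [hQdef, Matrix.conjTranspose_sub, Matrix.conjTranspose_one, hP.eq]
  have hQQ : Q * Q = Q := by
    rw [hQdef]
    simp [Matrix.sub_mul, Matrix.mul_sub, hPproj]
  -- eigenvalues of pt V
  have hpt : (pt V).IsHermitian := pt_isHermitian hV.1
  have e1 : V.trace = ↑(∑ i, hpt.eigenvalues i) := by
    rw [← pt_trace V]; exact trace_eq_sum_eigenvalues' hpt
  have e1re : V.trace.re = ∑ i, hpt.eigenvalues i := by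
    rw [e1, Complex.ofReal_re]
  have htn : ∑ i, |hpt.eigenvalues i| = 1 := by
    rw [traceNorm, dif_pos hpt] at hVtn
    exact hVtn
  -- upper bound: tr V ≤ 1
  have hub : V.trace.re ≤ 1 := by
    rw [e1re, ← htn]
    exact Finset.sum_le_sum fun i _ => le_abs_self _
  -- lower bound via Q V Q ≥ 0
  have hQVQ : (Q * V * Q).PosSemidef := by
    have := hV.conjTranspose_mul_mul_same Q
    rwa [hQherm] at this
  have htrQVQ : (Q * V * Q).trace.re = V.trace.re - 1 := by
    rw [Matrix.trace_mul_comm, ← Matrix.mul_assoc, hQQ, hQdef, Matrix.sub_mul,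
      Matrix.one_mul, Matrix.trace_sub, Complex.sub_re, hVopt]
  have hlb : 1 ≤ V.trace.re := by
    have := psd_trace_re_nonneg hQVQ
    rw [htrQVQ] at this
    linarith
  have htr : V.trace.re = 1 := le_antisymm hub hlb
  -- trace V = 1
  have hVtr : V.trace = 1 := by
    rw [e1, ← e1re, htr, Complex.ofReal_one]
  refine ⟨hVtr, ?_, ?_⟩
  -- pt V PSD
  · refine hpt.posSemidef_iff_eigenvalues_nonneg.mpr fun i => ?_
    have hsum : ∑ i, (|hpt.eigenvalues i| - hpt.eigenvalues i) = 0 := by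
      rw [Finset.sum_sub_distrib, htn, ← e1re, htr, sub_self]
    have h0 : ∀ j ∈ Finset.univ, |hpt.eigenvalues j| - hpt.eigenvalues j = 0 :=
      (Finset.sum_eq_zero_iff_of_nonneg
        (fun j _ => sub_nonneg.mpr (le_abs_self _))).mp hsum
    have := h0 i (Finset.mem_univ i)
    have habs : |hpt.eigenvalues i| = hpt.eigenvalues i := by linarith
    rw [← habs]
    exact abs_nonneg _
  -- range
  · have hQVQ0 : Q * V * Q = 0 := by
      apply psd_eq_zero_of_trace_re_zero hQVQ
      rw [htrQVQ, htr, sub_self]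
    obtain ⟨S, hS⟩ : ∃ S : Matrix (Fin a × Fin b) (Fin a × Fin b) ℂ, S.IsHermitian ∧ S * S = V := by
      open MatrixOrder in
      exact ⟨CFC.sqrt V, (Matrix.nonneg_iff_posSemidef.mp (CFC.sqrt_nonneg V)).1,
        CFC.sqrt_mul_sqrt_self V hV.nonneg⟩
    have hsq : S * Q = 0 := by
      apply Matrix.conjTranspose_mul_self_eq_zero.mp
      rw [Matrix.conjTranspose_mul, hQherm, hS.1.eq]
      calc Q * S * (S * Q)
          = Q * (S * S) * Q := by
            rw [Matrix.mul_assoc, Matrix.mul_assoc, Matrix.mul_assoc]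
        _ = Q * V * Q := by rw [hS.2]
        _ = 0 := hQVQ0
    have hVQ : V * Q = 0 := by
      rw [← hS.2, Matrix.mul_assoc, hsq, Matrix.mul_zero]
    have hVP : V * P = V := by
      have : V * (1 - P) = 0 := hVQ
      rw [Matrix.mul_sub, Matrix.mul_one, sub_eq_zero] at this
      exact this.symm
    have hPV : P * V = V := by
      have := congrArg Matrix.conjTranspose hVP
      rwa [Matrix.conjTranspose_mul, hP.eq, hV.1.eq] at this
    rw [← hPV, Matrix.mulVecLin_mul, ← hsupp]
    exact LinearMap.range_comp_le_range _ _
end
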